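/- A strongly connected digraph D is λ'-connected if and only if D contains a directed cycle C of length g(D) (the girth of D) such that the digraph D−V(C) contains at least one arc. -/

import Mathlib

/-- A digraph on vertex type `V`, given by its adjacency (arc) relation. -/
structure Digr (V : Type) where
  Adj : V → V → Prop

namespace Digr

variable {V : Type}

/-- Reachability by directed paths. -/
def Reach (D : Digr V) : V → V → Prop := Relation.ReflTransGen D.Adj

/-- A digraph is strongly connected if every vertex reaches every other. -/
def StronglyConnected (D : Digr V) : Prop := ∀ u v : V, D.Reach u v

/-- An oriented graph: no loops and no pair of opposite arcs. -/
def Oriented (D : Digr V) : Prop := ∀ u v : V, D.Adj u v → ¬ D.Adj v u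

/-- The digraph contains at least one arc. -/
def HasArc (D : Digr V) : Prop := ∃ u v : V, D.Adj u v

/-- Delete a set of arcs. -/
def delArcs (D : Digr V) (S : Set (V × V)) : Digr V :=
  ⟨fun a b => D.Adj a b ∧ (a, b) ∉ S⟩

/-- Delete a set of vertices (keep arcs avoiding them). -/
def delVerts (D : Digr V) (X : Set V) : Digr V :=
  ⟨fun a b => D.Adj a b ∧ a ∉ X ∧ b ∉ X⟩

/-- Induced subdigraph on a vertex set. -/
def induce (D : Digr V) (X : Set V) : Digr V :=
  ⟨fun a b => a ∈ X ∧ b ∈ X ∧ D.Adj a b⟩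

/-- The induced subdigraph on `X` is strongly connected. -/
def StronglyConnectedOn (D : Digr V) (X : Set V) : Prop :=
  ∀ u ∈ X, ∀ v ∈ X, (D.induce X).Reach u v

/-- Mutual reachability. -/
def MReach (D : Digr V) (u v : V) : Prop := D.Reach u v ∧ D.Reach v u

/-- `X` is a strong component: an equivalence class of mutual reachability. -/
def IsStrongComponent (D : Digr V) (X : Set V) : Prop :=
  ∃ x : V, X = {y | D.MReach x y}

/-- `S` is a restricted arc-cut: a set of arcs whose deletion leaves a
non-trivial strong component `X` (containing an arc) such that deleting the
vertices of `X` from `D` leaves an arc. -/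
def IsRestrictedArcCut (D : Digr V) (S : Set (V × V)) : Prop :=
  (∀ p ∈ S, D.Adj p.1 p.2) ∧
  ∃ X : Set V, (D.delArcs S).IsStrongComponent X ∧
    (∃ u ∈ X, ∃ v ∈ X, (D.delArcs S).Adj u v) ∧
    (D.delVerts X).HasArc

/-- A digraph is λ'-connected if it admits a restricted arc-cut. -/
def LambdaPrimeConnected (D : Digr V) : Prop :=
  ∃ S : Set (V × V), D.IsRestrictedArcCut S

/-- λ'(D): minimum size of a restricted arc-cut. -/
noncomputable def lambdaPrime (D : Digr V) [Fintype V] : ℕ :=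
  sInf {n : ℕ | ∃ S : Finset (V × V), D.IsRestrictedArcCut ↑S ∧ S.card = n}

/-- λ(D): the arc-connectivity, the minimum size of an arc set whose removal
destroys strong connectivity. -/
noncomputable def lambda (D : Digr V) [Fintype V] : ℕ :=
  sInf {n : ℕ | ∃ S : Finset (V × V), (∀ p ∈ S, D.Adj p.1 p.2) ∧
    ¬ (D.delArcs ↑S).StronglyConnected ∧ S.card = n}

/-- The list `l` of distinct vertices forms a directed cycle. -/
def IsCycleList (D : Digr V) (l : List V) : Prop :=
  ∃ h : l ≠ [], l.Nodup ∧ l.Chain' D.Adj ∧ D.Adj (l.getLast h) (l.head h)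

/-- The girth: minimum length of a directed cycle. -/
noncomputable def girth (D : Digr V) : ℕ :=
  sInf {n : ℕ | ∃ l : List V, D.IsCycleList l ∧ l.length = n}

/-- `(u,v,w,z,u)` is a 4-cycle of `D`. -/
def Cycle4 (D : Digr V) (u v w z : V) : Prop := D.IsCycleList [u, v, w, z]

/-- Out-degree. -/
def outDeg (D : Digr V) [Fintype V] [DecidableRel D.Adj] (v : V) : ℕ :=
  (Finset.univ.filter fun w => D.Adj v w).card

/-- In-degree. -/
def inDeg (D : Digr V) [Fintype V] [DecidableRel D.Adj] (v : V) : ℕ :=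
  (Finset.univ.filter fun w => D.Adj w v).card

/-- ξ(D): minimum over girth cycles `C` of
`min (Σ d⁺ − g, Σ d⁻ − g)`. -/
noncomputable def xi (D : Digr V) [Fintype V] [DecidableRel D.Adj] : ℤ :=
  sInf {k : ℤ | ∃ l : List V, D.IsCycleList l ∧ l.length = D.girth ∧
    k = min (((l.map D.outDeg).sum : ℤ) - (D.girth : ℤ))
            (((l.map D.inDeg).sum : ℤ) - (D.girth : ℤ))}

/-- ∂⁺(X): the set of arcs from `X` to its complement. -/
noncomputable def outBoundary (D : Digr V) [Fintype V] (X : Set V) : Finset (V × V) :=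
  (Set.toFinite {p : V × V | p.1 ∈ X ∧ p.2 ∉ X ∧ D.Adj p.1 p.2}).toFinset

/-- ∂⁻(X): the set of arcs from the complement of `X` into `X`. -/
noncomputable def inBoundary (D : Digr V) [Fintype V] (X : Set V) : Finset (V × V) :=
  (Set.toFinite {p : V × V | p.1 ∉ X ∧ p.2 ∈ X ∧ D.Adj p.1 p.2}).toFinset

/-- The list of arcs of a cycle given as a vertex list. -/
def cycleArcs (l : List V) : List (V × V) := l.zip (l.rotate 1)

end Digr

namespace Stmt1Aux
open List Digr
variable {V : Type} {D : Digr V}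

theorem getLast_congr {α : Type} {l₁ l₂ : List α} (h : l₁ = l₂) (h1 : l₁ ≠ []) :
    l₁.getLast h1 = l₂.getLast (h ▸ h1) := by subst h; rfl

theorem getLast_cons' {α : Type} (a : α) (l : List α) (hl : l ≠ []) (h2 : a :: l ≠ []) :
    (a :: l).getLast h2 = l.getLast hl := List.getLast_cons hl

theorem dedup_chain {α : Type} {r : α → α → Prop} :
    ∀ (n : ℕ) (l : List α) (a b : α), l.length = n → Chain r a l →
      (a :: l).getLast (cons_ne_nil a l) = b →
      ∃ l', Chain r a l' ∧ (a :: l').getLast (cons_ne_nil a l') = b ∧ (a :: l').Nodup ∧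
        ∀ x ∈ a :: l', x ∈ a :: l := by
  intro n
  induction n using Nat.strong_induction_on with
  | _ n IH =>
    intro l a b hlen hch hlast
    by_cases ha : a ∈ l
    · obtain ⟨s, t, rfl⟩ := List.append_of_mem ha
      have hcht : Chain r a t := (isChain_cons_split.1 hch).2
      have hlast' : (a :: t).getLast (cons_ne_nil a t) = b := by
        rw [← hlast, getLast_congr (show a :: (s ++ a :: t) = (a :: s) ++ (a :: t) by simp)
          (cons_ne_nil _ _), List.getLast_append]; simp
      obtain ⟨l', h1, h2, h3, h4⟩ := IH t.length (by simp [← hlen]; omega) t a b rfl hcht hlast'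
      exact ⟨l', h1, h2, h3, fun x hx => by
        rcases List.mem_cons.1 (h4 x hx) with h | h
        · simp [h]
        · simp only [mem_cons, mem_append]; tauto⟩
    · match l, hch with
      | [], _ => exact ⟨[], List.Chain.nil, by simpa using hlast, by simp, by simp⟩
      | c :: l2, hch0 =>
        obtain ⟨hac, hch2⟩ := isChain_cons_cons.1 hch0
        have hlast' : (c :: l2).getLast (cons_ne_nil c l2) = b := by
          rw [← hlast]; exact (List.getLast_cons (cons_ne_nil c l2)).symm
        obtain ⟨l'', h1, h2, h3, h4⟩ := IH l2.length (by simp [← hlen]) l2 c b rfl hch2 hlast'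
        refine ⟨c :: l'', .cons hac h1, ?_, ?_, ?_⟩
        · rw [← h2]; exact List.getLast_cons (cons_ne_nil c l'')
        · refine List.nodup_cons.2 ⟨fun hmem => ha ?_, h3⟩
          exact h4 a hmem
        · intro x hx
          rcases List.mem_cons.1 hx with rfl | hx
          · simp
          · simpa using Or.inr (h4 x hx)

theorem chain_mem_targets {α : Type} {r : α → α → Prop} :
    ∀ (l : List α) (a : α), Chain r a l → ∀ b ∈ l, ∃ c, r c b := by
  intro l
  induction l with
  | nil => intro a _ b hb; simp at hb
  | cons c l2 IH =>
    intro a hch b hb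
    rcases hch with (_ | ⟨hac, hch2⟩)
    rcases List.mem_cons.1 hb with rfl | hb
    · exact ⟨a, ‹r a b›⟩
    · exact IH c ‹Chain r c l2› b hb


theorem cycle_rotate_one {l : List V} (h : D.IsCycleList l) : D.IsCycleList (l.rotate 1) := by
  obtain ⟨hne, hnd, hch, hcl⟩ := h
  match l, hne, hnd, hch, hcl with
  | [a], _, hnd, hch, hcl => exact ⟨by simp, by simpa using hnd, by simpa using hch, by simpa using hcl⟩
  | a :: c :: t, _, hnd, hch, hcl =>
    have hrot : (a :: c :: t).rotate 1 = (c :: t) ++ [a] := by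
      rw [List.rotate_eq_drop_append_take (by simp)]; simp
    rw [hrot]
    refine ⟨by simp, ?_, ?_, ?_⟩
    · exact ((List.perm_append_singleton a (c :: t)).nodup_iff).2 hnd
    · refine List.isChain_append.2 ?_
      refine ⟨(List.isChain_cons_cons.1 hch).2, List.isChain_singleton a, ?_⟩
      intro x hx y hy
      simp only [Option.mem_def, List.head?_cons, Option.some.injEq] at hx hy
      rw [List.getLast?_eq_getLast (cons_ne_nil c t), Option.some.injEq] at hx
      subst hy; subst hx
      have hgl := hcl
      rw [List.getLast_cons (cons_ne_nil c t)] at hgl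
      simpa using hgl
    · have h1 : ((c :: t) ++ [a]).getLast (by simp) = a := by
        rw [List.getLast_append]; simp
      have h2 : ((c :: t) ++ [a]).head (by simp) = c := rfl
      rw [h1, h2]
      exact (List.isChain_cons_cons.1 hch).1

theorem cycle_rotate {l : List V} (h : D.IsCycleList l) (n : ℕ) : D.IsCycleList (l.rotate n) := by
  induction n with
  | zero => simpa using h
  | succ k IH => rw [show k + 1 = k + 1 from rfl, ← List.rotate_rotate]; exact cycle_rotate_one IH

theorem exists_rotate_head {l : List V} {a : V} (ha : a ∈ l) :
    ∃ n t, n ≤ l.length ∧ l.rotate n = a :: t := by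
  obtain ⟨s, t, rfl⟩ := List.append_of_mem ha
  refine ⟨s.length, t ++ s, by simp, ?_⟩
  rw [List.rotate_eq_drop_append_take (by simp)]
  simp

theorem head_reach {r : V → V → Prop} :
    ∀ (t : List V) (a : V), Chain' r (a :: t) → ∀ q ∈ a :: t, Relation.ReflTransGen r a q := by
  intro t
  induction t with
  | nil => intro a _ q hq; simp at hq; subst hq; exact .refl
  | cons c t' IH =>
    intro a hch q hq
    rcases List.mem_cons.1 hq with rfl | hq
    · exact .refl
    · exact .head (List.isChain_cons_cons.1 hch).1 (IH c (List.isChain_cons_cons.1 hch).2 q hq)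

theorem length_ge_three (hO : D.Oriented) {l : List V} (h : D.IsCycleList l) : 3 ≤ l.length := by
  obtain ⟨hne, hnd, hch, hcl⟩ := h
  match l with
  | [a] => exact absurd hcl (hO a a (by simpa using hcl))
  | [a, b] =>
    have : D.Adj a b := (List.isChain_cons_cons.1 hch).1
    simp only [List.getLast, List.head] at hcl
    exact absurd this (hO b a hcl)
  | a :: b :: c :: t => simp
  | [] => exact absurd rfl hne



theorem cycle_reach {l : List V} (h : D.IsCycleList l) {p q : V} (hp : p ∈ l) (hq : q ∈ l) :
    Relation.ReflTransGen D.Adj p q := by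
  obtain ⟨n, t, _, hrot⟩ := exists_rotate_head hp
  have h2 := cycle_rotate h n
  rw [hrot] at h2
  obtain ⟨_, _, hch, _⟩ := h2
  exact head_reach _ _ hch q (by rw [← hrot]; exact List.mem_rotate.2 hq)

section ZModPart
variable {g : ℕ} [NeZero g] {τ : ZMod g → V}

theorem seg_facts (hg : 3 ≤ g) (hinj : Function.Injective τ)
    (hadj : ∀ i, D.Adj (τ i) (τ (i + 1))) (i j : ZMod g) :
    ∃ L : List V, L.length = (i - j).val + 1 ∧ L.Nodup ∧ L.Chain' D.Adj ∧
      (∀ hne : L ≠ [], L.head hne = τ j ∧ L.getLast hne = τ i) ∧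
      (∀ y ∈ L, y ∈ Set.range τ) := by
  set d := (i - j).val with hd
  have hdlt : d < g := ZMod.val_lt _
  refine ⟨List.ofFn (fun k : Fin (d + 1) => τ (j + (k : ℕ))), by simp, ?_, ?_, ?_, ?_⟩
  · rw [List.nodup_ofFn]
    intro k1 k2 hk
    have h1 : j + ((k1 : ℕ) : ZMod g) = j + ((k2 : ℕ) : ZMod g) := hinj hk
    have h2 : ((k1 : ℕ) : ZMod g) = ((k2 : ℕ) : ZMod g) := by
      exact add_left_cancel h1
    have v1 : (((k1 : ℕ) : ZMod g)).val = k1 := ZMod.val_cast_of_lt (by omega)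
    have v2 : (((k2 : ℕ) : ZMod g)).val = k2 := ZMod.val_cast_of_lt (by omega)
    have := congrArg ZMod.val h2
    rw [v1, v2] at this
    exact Fin.ext this
  · refine List.isChain_iff_getElem.2 ?_
    intro n hn
    simp only [List.getElem_ofFn, Fin.val_mk]
    have := hadj (j + (n : ZMod g))
    convert this using 2
    push_cast; ring
  · intro hne
    constructor
    · rw [List.head_ofFn]
      simp
    · rw [List.getLast_ofFn]
      simp only [Nat.add_sub_cancel]
      have : ((d : ℕ) : ZMod g) = i - j := by
        rw [hd]; exact ZMod.natCast_rightInverse (i - j)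
      rw [this]; ring_nf
  · intro y hy
    rw [List.mem_ofFn] at hy
    obtain ⟨k, rfl⟩ := hy
    exact ⟨_, rfl⟩


namespace MoreAux
theorem cast_sub_one (hg : 1 ≤ g) : ((g - 1 : ℕ) : ZMod g) = -1 := by
  have h : ((g - 1 : ℕ) : ZMod g) + 1 = 0 := by
    rw [show ((1:ZMod g)) = ((1:ℕ) : ZMod g) by push_cast; ring, ← Nat.cast_add,
      show g - 1 + 1 = g by omega, ZMod.natCast_self]
  linear_combination h

theorem cast_sub_two (hg : 2 ≤ g) : ((g - 2 : ℕ) : ZMod g) = -2 := by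
  have h : ((g - 2 : ℕ) : ZMod g) + 2 = 0 := by
    rw [show ((2:ZMod g)) = ((2:ℕ) : ZMod g) by push_cast; ring, ← Nat.cast_add,
      show g - 2 + 2 = g by omega, ZMod.natCast_self]
  linear_combination h

theorem chord (hg : 3 ≤ g) (hinj : Function.Injective τ)
    (hadj : ∀ i, D.Adj (τ i) (τ (i + 1)))
    (hgirth : ∀ l, D.IsCycleList l → g ≤ l.length)
    {i j : ZMod g} (h : D.Adj (τ i) (τ j)) : j = i + 1 := by
  obtain ⟨L, hlen, hnd, hch, hends, _⟩ := seg_facts hg hinj hadj i j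
  have hne : L ≠ [] := by rw [← List.length_pos_iff_ne_nil]; omega
  have hcyc : D.IsCycleList L := ⟨hne, hnd, hch, by rw [(hends hne).1, (hends hne).2]; exact h⟩
  have hge := hgirth L hcyc
  have hlt : (i - j).val < g := ZMod.val_lt _
  have hdeq : (i - j).val = g - 1 := by omega
  have : i - j = ((g - 1 : ℕ) : ZMod g) := by
    rw [← hdeq]; exact (ZMod.natCast_rightInverse (i - j)).symm
  rw [cast_sub_one (by omega)] at this
  linear_combination -this

theorem dlem (hg : 3 ≤ g) (hinj : Function.Injective τ)
    (hadj : ∀ i, D.Adj (τ i) (τ (i + 1)))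
    (hgirth : ∀ l, D.IsCycleList l → g ≤ l.length)
    {i j : ZMod g} {x : V} (hx : x ∉ Set.range τ)
    (h1 : D.Adj (τ i) x) (h2 : D.Adj x (τ j)) : j = i + 1 ∨ j = i + 2 := by
  obtain ⟨L, hlen, hnd, hch, hends, hmem⟩ := seg_facts hg hinj hadj i j
  have hne : L ≠ [] := by rw [← List.length_pos_iff_ne_nil]; omega
  have hcyc : D.IsCycleList (x :: L) := by
    refine ⟨List.cons_ne_nil _ _, ?_, ?_, ?_⟩
    · exact List.nodup_cons.2 ⟨fun hc => hx (hmem x hc), hnd⟩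
    · refine List.isChain_cons.2 ⟨?_, hch⟩
      intro y hy
      rw [List.head?_eq_head hne, Option.mem_def, Option.some.injEq] at hy
      rw [← hy, (hends hne).1]; exact h2
    · rw [List.getLast_cons hne, (hends hne).2]
      exact h1
  have hge := hgirth _ hcyc
  simp only [List.length_cons, hlen] at hge
  have hlt : (i - j).val < g := ZMod.val_lt _
  have hdeq : (i - j).val = g - 1 ∨ (i - j).val = g - 2 := by omega
  rcases hdeq with hdeq | hdeq
  · left
    have : i - j = ((g - 1 : ℕ) : ZMod g) := by
      rw [← hdeq]; exact (ZMod.natCast_rightInverse (i - j)).symm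
    rw [cast_sub_one (by omega)] at this
    linear_combination -this
  · right
    have : i - j = ((g - 2 : ℕ) : ZMod g) := by
      rw [← hdeq]; exact (ZMod.natCast_rightInverse (i - j)).symm
    rw [cast_sub_two (by omega)] at this
    linear_combination -this


end MoreAux
theorem cast_sub' (k : ℕ) (hk : k ≤ g) : ((g - k : ℕ) : ZMod g) = -((k : ℕ) : ZMod g) := by
  have h : ((g - k : ℕ) : ZMod g) + ((k : ℕ) : ZMod g) = 0 := by
    rw [← Nat.cast_add, show g - k + k = g by omega, ZMod.natCast_self]
  linear_combination h

theorem cast_inj_nat {a b : ℕ} (h : (a : ZMod g) = (b : ZMod g)) (ha : a < g) (hb : b < g) :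
    a = b := by
  have := congrArg ZMod.val h
  rwa [ZMod.val_cast_of_lt ha, ZMod.val_cast_of_lt hb] at this

theorem walkup (hg : 3 ≤ g)
    (c₁ : List V)
    (Hchord : ∀ i j : ZMod g, D.Adj (τ i) (τ j) → j = i + 1)
    (Htouch : ∀ a b, D.Adj a b → a ∈ Set.range τ ∨ b ∈ Set.range τ)
    (HB : ∀ (k : ℕ) (a x b : V) (rest : List V), c₁.rotate k = a :: x :: b :: rest →
      x ∉ Set.range τ → ∀ ia ib : ZMod g, a = τ ia → b = τ ib → ib = ia + 2)
    (hw : ∀ z ∈ c₁, z ≠ τ (-1))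
    (hchain : c₁.Chain' D.Adj)
    (hclose : ∀ h : c₁ ≠ [], D.Adj (c₁.getLast h) (τ (-2)))
    (hhead : ∀ h : c₁ ≠ [], c₁.head h = τ (-2))
    (hlen4 : 4 ≤ c₁.length) :
    ∀ (n : ℕ) (L : List V) (i : ℕ), L.length = n → i ≤ g - 2 → ((i : ZMod g) ≠ -2) →
      (∀ z ∈ L, z ≠ τ (-2)) → ((τ (i : ℕ) :: L) <:+ c₁) →
      L.length + 1 = g - 2 - i := by
  have hc₁ne : c₁ ≠ [] := by rw [← List.length_pos_iff_ne_nil]; omega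
  intro n
  induction n using Nat.strong_induction_on with
  | _ n IH =>
    intro L i hlen hi hne hnv hsuf
    match L, hlen with
    | [], _ =>
      -- closing on-step
      have hlast : τ (i : ℕ) = c₁.getLast hc₁ne := by
        obtain ⟨t, ht⟩ := hsuf
        rw [List.getLast_congr hc₁ne (by simp) ht.symm, List.getLast_append]
        simp
      have hadj2 : D.Adj (τ (i : ℕ)) (τ (-2)) := by rw [hlast]; exact hclose hc₁ne
      have h3 : (-2 : ZMod g) = (i : ℕ) + 1 := Hchord _ _ hadj2
      have h4 : ((i : ℕ) : ZMod g) = ((g - 3 : ℕ) : ZMod g) := by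
        rw [cast_sub' 3 (by omega)]
        push_cast at h3 ⊢
        linear_combination -h3
      have h5 : i = g - 3 := cast_inj_nat h4 (by omega) (by omega)
      simp; omega
    | q :: L', hlen =>
      have hsub : ∀ z ∈ τ (i : ℕ) :: q :: L', z ∈ c₁ := fun z hz => hsuf.subset hz
      have hchsuf : Chain' D.Adj (τ (i : ℕ) :: q :: L') := hchain.suffix hsuf
      have hine2 : i ≠ g - 2 := by
        intro h
        apply hne
        rw [h, cast_sub' 2 (by omega)]; push_cast; ring
      by_cases hq : q ∈ Set.range τ
      · -- on-step
        obtain ⟨jZ, rfl⟩ := hq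
        have hadj1 : D.Adj (τ (i : ℕ)) (τ jZ) := (List.isChain_cons_cons.1 hchsuf).1
        have hj : jZ = (i : ℕ) + 1 := Hchord _ _ hadj1
        have hcast : ((i + 1 : ℕ) : ZMod g) = jZ := by rw [hj]; push_cast; ring
        have hne' : ((i + 1 : ℕ) : ZMod g) ≠ -2 := by
          intro h
          exact hnv (τ jZ) (by simp) (by rw [← hcast, h])
        have hi' : i + 1 ≤ g - 2 := by omega
        have hsuf' : τ ((i + 1 : ℕ)) :: L' <:+ c₁ := by
          obtain ⟨t, ht⟩ := hsuf
          refine ⟨t ++ [τ (i : ℕ)], ?_⟩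
          rw [hcast]
          simpa using ht
        have := IH L'.length (by simp at hlen; omega) L' (i + 1) rfl hi' hne'
          (fun z hz => hnv z (by simp [hz])) hsuf'
        simp at this ⊢
        omega
      · -- detour
        match L', hlen with
        | [], hlen =>
          -- closing detour
          obtain ⟨pre, hpre⟩ := hsuf
          have hprelen : pre.length + 2 = c₁.length := by rw [← hpre]; simp
          have hprene : pre ≠ [] := by
            rw [← List.length_pos_iff_ne_nil]; omega
          have hrot : c₁.rotate pre.length = τ (i : ℕ) :: q :: pre := by
            rw [List.rotate_eq_drop_append_take (by omega), ← hpre, List.drop_left,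
              List.take_left]
            simp
          have hprehead : pre.head hprene = τ (-2) := by
            rw [← hhead hc₁ne]
            have : c₁.head hc₁ne = (pre ++ [τ (i:ℕ), q]).head (by simp [hprene]) := by
              congr 1; exact hpre.symm
            rw [this, List.head_append]
            simp [hprene]
          have hpredec : pre = τ (-2) :: pre.tail := by
            conv_lhs => rw [← List.cons_head_tail hprene]
            rw [hprehead]
          have hrot2 : c₁.rotate pre.length = τ (i : ℕ) :: q :: τ (-2) :: pre.tail := by
            rw [hrot, ← hpredec]
          have h2 : (-2 : ZMod g) = (i : ℕ) + 2 := HB pre.length _ q _ _ hrot2 hq _ _ rfl rfl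
          by_cases hg4 : 4 ≤ g
          · have h4 : ((i : ℕ) : ZMod g) = ((g - 4 : ℕ) : ZMod g) := by
              rw [cast_sub' 4 (by omega)]
              push_cast at h2 ⊢
              linear_combination -h2
            have h5 : i = g - 4 := cast_inj_nat h4 (by omega) (by omega)
            simp; omega
          · exfalso
            obtain rfl : g = 3 := by omega
            have h4 : ((i : ℕ) : ZMod 3) = ((2 : ℕ) : ZMod 3) := by
              have h3z : ((3 : ℕ) : ZMod 3) = 0 := ZMod.natCast_self 3
              push_cast at h2 ⊢
              linear_combination -h2 - 2 * h3z
            have := cast_inj_nat h4 (by omega) (by omega)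
            omega
        | r :: L'', hlen =>
          have hadjqr : D.Adj q r := (List.isChain_cons_cons.1 (List.isChain_cons_cons.1 hchsuf).2).1
          have hr : r ∈ Set.range τ := by
            rcases Htouch q r hadjqr with h | h
            · exact absurd h hq
            · exact h
          obtain ⟨kZ, rfl⟩ := hr
          obtain ⟨pre, hpre⟩ := hsuf
          have hrot : c₁.rotate pre.length = τ (i : ℕ) :: q :: τ kZ :: (L'' ++ pre) := by
            rw [List.rotate_eq_drop_append_take (by rw [← hpre]; simp), ← hpre, List.drop_left,
              List.take_left]
            simp
          have hk : kZ = (i : ℕ) + 2 := HB pre.length _ q _ _ hrot hq _ _ rfl rfl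
          have hrc : τ kZ ∈ c₁ := hsub _ (by simp)
          have hine3 : i ≠ g - 3 := by
            intro h
            apply hw _ hrc
            rw [hk, h, cast_sub' 3 (by omega)]
            congr 1
            push_cast; ring
          have hcast : ((i + 2 : ℕ) : ZMod g) = kZ := by rw [hk]; push_cast; ring
          have hne' : ((i + 2 : ℕ) : ZMod g) ≠ -2 := by
            intro h
            exact hnv (τ kZ) (by simp) (by rw [← hcast, h])
          have hi' : i + 2 ≤ g - 2 := by omega
          have hsuf' : τ ((i + 2 : ℕ)) :: L'' <:+ c₁ := by
            refine ⟨pre ++ [τ (i:ℕ), q], ?_⟩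
            rw [hcast]
            simpa using hpre
          have := IH L''.length (by simp at hlen; omega) L'' (i + 2) rfl hi' hne'
            (fun z hz => hnv z (by simp [hz])) hsuf'
          simp at this ⊢
          omega


end ZModPart

theorem key (hO : D.Oriented) :
    ∀ (m : ℕ) (c : List V), c.length = m → D.IsCycleList c →
      ∀ u v : V, D.Adj u v → u ∉ c → v ∉ c →
      ∃ l, D.IsCycleList l ∧ l.length = D.girth ∧ (D.delVerts {x | x ∈ l}).HasArc := by
  classical
  intro m
  induction m using Nat.strong_induction_on with
  | _ m IH =>
    intro c hclen hc u v huv hu hv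
    set g := D.girth with hgdef
    have hmem : m ∈ {n : ℕ | ∃ l, D.IsCycleList l ∧ l.length = n} := ⟨c, hc, hclen⟩
    have hgle : g ≤ m := Nat.sInf_le hmem
    have hgirth_lb : ∀ l, D.IsCycleList l → g ≤ l.length := fun l hl =>
      Nat.sInf_le ⟨l, hl, rfl⟩
    obtain ⟨l₀, hl₀cyc, hl₀len⟩ : ∃ l, D.IsCycleList l ∧ l.length = g :=
      Nat.sInf_mem (⟨m, hmem⟩ : Set.Nonempty _)
    have hg3 : 3 ≤ g := hl₀len ▸ length_ge_three hO hl₀cyc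
    by_cases hdone : (D.delVerts {x | x ∈ l₀}).HasArc
    · exact ⟨l₀, hl₀cyc, hl₀len, hdone⟩
    have Htouch0 : ∀ a b, D.Adj a b → a ∈ l₀ ∨ b ∈ l₀ := by
      intro a b hab
      by_contra hq
      push_neg at hq
      exact hdone ⟨a, b, hab, hq.1, hq.2⟩
    by_cases hmg : m = g
    · exact ⟨c, hc, by omega, ⟨u, v, huv, hu, hv⟩⟩
    have hmgt : g < m := by omega
    haveI : NeZero g := ⟨by omega⟩
    -- construct σ
    obtain ⟨hl₀ne, hl₀nd, hl₀ch, hl₀cl⟩ := hl₀cyc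
    set σ : ZMod g → V := fun i => l₀.get ⟨i.val, by rw [hl₀len]; exact ZMod.val_lt i⟩
      with hσdef
    have hσinj : Function.Injective σ := by
      intro i j hij
      have := (hl₀nd.get_inj_iff).1 hij
      exact ZMod.val_injective g (by simpa using this)
    have hσadj : ∀ i, D.Adj (σ i) (σ (i + 1)) := by
      intro i
      have hval : i.val < g := ZMod.val_lt i
      have hv1 : (1 : ZMod g).val = 1 := by
        have h := ZMod.val_one_eq_one_mod g
        rwa [Nat.mod_eq_of_lt (by omega)] at h
      by_cases hcase : i.val + 1 < g
      · have hvadd : (i + 1).val = i.val + 1 := by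
          rw [ZMod.val_add, hv1, Nat.mod_eq_of_lt (by omega)]
        have : D.Adj (l₀.get ⟨i.val, by rw [hl₀len]; omega⟩) (l₀.get ⟨i.val + 1, by rw [hl₀len]; omega⟩) :=
          List.isChain_iff_getElem.1 hl₀ch i.val (by rw [hl₀len]; omega)
        simp only [hσdef]
        convert this using 2
        exact Fin.ext hvadd
      · have hival : i.val = g - 1 := by omega
        have hi1 : (i + 1).val = 0 := by
          rw [ZMod.val_add, hv1, hival, show g - 1 + 1 = g by omega, Nat.mod_self]
        have hgl : σ i = l₀.getLast hl₀ne := by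
          simp only [hσdef, List.get_eq_getElem]
          rw [List.getLast_eq_getElem]
          congr 1
          simp [hival, hl₀len]
        have hhd : σ (i + 1) = l₀.head hl₀ne := by
          simp only [hσdef]
          rw [← List.get_mk_zero (by rw [hl₀len]; omega)]
          congr 1
          simp [hi1]
        rw [hgl, hhd]
        exact hl₀cl
    have hσrange : ∀ x, x ∈ Set.range σ ↔ x ∈ l₀ := by
      intro x
      constructor
      · rintro ⟨i, rfl⟩; exact List.get_mem _ _
      · intro hx
        obtain ⟨⟨k, hk⟩, hget⟩ := List.mem_iff_get.1 hx
        refine ⟨(k : ZMod g), ?_⟩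
        simp only [hσdef]
        rw [← hget]
        congr 1
        exact Fin.ext (ZMod.val_cast_of_lt (by rw [hl₀len] at hk; exact hk))
    -- w : vertex of l₀ not on c
    have hwex : ∃ w, w ∈ l₀ ∧ w ∉ c := by
      rcases Htouch0 u v huv with h | h
      · exact ⟨u, h, hu⟩
      · exact ⟨v, h, hv⟩
    obtain ⟨w, hwl₀, hwc⟩ := hwex
    obtain ⟨iw, hiw⟩ : w ∈ Set.range σ := (hσrange w).2 hwl₀
    -- τ
    set τ : ZMod g → V := fun i => σ (iw + 1 + i) with hτdef
    have hτinj : Function.Injective τ := fun i j hij => by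
      have := hσinj hij
      exact by linear_combination this
    have hτadj : ∀ i, D.Adj (τ i) (τ (i + 1)) := by
      intro i
      have := hσadj (iw + 1 + i)
      simpa [hτdef, add_assoc] using this
    have hτrange : ∀ x, x ∈ Set.range τ ↔ x ∈ l₀ := by
      intro x
      rw [← hσrange]
      constructor
      · rintro ⟨i, rfl⟩; exact ⟨iw + 1 + i, rfl⟩
      · rintro ⟨j, rfl⟩
        exact ⟨j - iw - 1, by simp only [hτdef]; congr 1; ring⟩
    have hwτ : τ (-1) = w := by
      simp only [hτdef]
      rw [show iw + 1 + -1 = iw by ring, hiw]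
    have Htouch : ∀ a b, D.Adj a b → a ∈ Set.range τ ∨ b ∈ Set.range τ := by
      intro a b hab
      rcases Htouch0 a b hab with h | h
      · exact Or.inl ((hτrange a).2 h)
      · exact Or.inr ((hτrange b).2 h)
    have Hchord : ∀ i j : ZMod g, D.Adj (τ i) (τ j) → j = i + 1 :=
      fun i j h => MoreAux.chord hg3 hτinj hτadj hgirth_lb h
    -- case A : a shortcut detour exists
    by_cases hA : ∃ (k : ℕ) (a x b : V) (rest : List V) (ia ib : ZMod g),
        c.rotate k = a :: x :: b :: rest ∧ x ∉ Set.range τ ∧ a = τ ia ∧ b = τ ib ∧ ib = ia + 1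
    · obtain ⟨k, a, x, b, rest, ia, ib, hrot, hxoff, rfl, rfl, rfl⟩ := hA
      have hrotcyc : D.IsCycleList (c.rotate k) := cycle_rotate hc k
      rw [hrot] at hrotcyc
      obtain ⟨hrne, hrnd, hrch, hrcl⟩ := hrotcyc
      have hrlen : rest.length + 3 = m := by
        have := List.length_rotate c k
        rw [hrot] at this
        simp at this
        omega
      have hrestne : rest ≠ [] := by
        rw [← List.length_pos_iff_ne_nil]; omega
      have hsub : (τ ia :: τ (ia + 1) :: rest) <+ (τ ia :: x :: τ (ia + 1) :: rest) :=
        List.Sublist.cons₂ _ (List.Sublist.cons _ (List.Sublist.refl _))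
      have hc₂cyc : D.IsCycleList (τ ia :: τ (ia + 1) :: rest) := by
        refine ⟨List.cons_ne_nil _ _, hrnd.sublist hsub, ?_, ?_⟩
        · refine List.isChain_cons_cons.2 ?_
          exact ⟨hτadj ia, List.IsChain.tail (List.IsChain.tail hrch)⟩
        · have e1 : (τ ia :: τ (ia + 1) :: rest).getLast (List.cons_ne_nil _ _)
              = rest.getLast hrestne := by
            rw [getLast_cons' _ _ (List.cons_ne_nil _ _), getLast_cons' _ _ hrestne]
          have e2 : (τ ia :: x :: τ (ia + 1) :: rest).getLast (List.cons_ne_nil _ _)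
              = rest.getLast hrestne := by
            rw [getLast_cons' _ _ (List.cons_ne_nil _ _), getLast_cons' _ _ (List.cons_ne_nil _ _),
              getLast_cons' _ _ hrestne]
          rw [e1]
          rw [e2] at hrcl
          exact hrcl
      refine IH (m - 1) (by omega) (τ ia :: τ (ia + 1) :: rest) (by simp; omega) hc₂cyc u v huv
        (fun hmem => hu ?_) (fun hmem => hv ?_)
      · have : u ∈ (τ ia :: x :: τ (ia + 1) :: rest) := by
          rcases List.mem_cons.1 hmem with h | h
          · simp [h]
          · simp only [List.mem_cons] at h ⊢; tauto
        rw [← hrot] at this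
        exact List.mem_rotate.1 this
      · have : v ∈ (τ ia :: x :: τ (ia + 1) :: rest) := by
          rcases List.mem_cons.1 hmem with h | h
          · simp [h]
          · simp only [List.mem_cons] at h ⊢; tauto
        rw [← hrot] at this
        exact List.mem_rotate.1 this
    -- case B
    · exfalso
      have HB : ∀ (k : ℕ) (a x b : V) (rest : List V), c.rotate k = a :: x :: b :: rest →
          x ∉ Set.range τ → ∀ ia ib : ZMod g, a = τ ia → b = τ ib → ib = ia + 2 := by
        intro k a x b rest hrot hxoff ia ib ha hb
        have hrotcyc : D.IsCycleList (c.rotate k) := cycle_rotate hc k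
        rw [hrot] at hrotcyc
        obtain ⟨_, _, hrch, _⟩ := hrotcyc
        have hax : D.Adj a x := (List.isChain_cons_cons.1 hrch).1
        have hxb : D.Adj x b := (List.isChain_cons_cons.1 (List.isChain_cons_cons.1 hrch).2).1
        subst ha hb
        rcases MoreAux.dlem hg3 hτinj hτadj hgirth_lb hxoff hax hxb with h | h
        · exact absurd ⟨k, _, x, _, rest, ia, ib, hrot, hxoff, rfl, rfl, h⟩ hA
        · exact h
      -- find an on-vertex of c
      have honex : ∃ i : ℕ, i < g ∧ τ (i : ℕ) ∈ c := by
        have hlen2 : 2 ≤ c.length := by omega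
        have hadj01 : D.Adj (c.get ⟨0, by omega⟩) (c.get ⟨1, by omega⟩) := by
          obtain ⟨_, _, hcch, _⟩ := hc
          exact List.isChain_iff_getElem.1 hcch 0 (by omega)
        have hone : ∃ z, z ∈ Set.range τ ∧ z ∈ c := by
          rcases Htouch _ _ hadj01 with h | h
          · exact ⟨_, h, List.get_mem _ _⟩
          · exact ⟨_, h, List.get_mem _ _⟩
        obtain ⟨z, ⟨iz, rfl⟩, hzc⟩ := hone
        exact ⟨iz.val, ZMod.val_lt iz, by
          rwa [show ((iz.val : ℕ) : ZMod g) = iz from ZMod.natCast_rightInverse iz]⟩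
      obtain ⟨i₁, hi₁lt, hi₁mem⟩ := honex
      set T : Finset ℕ := (Finset.range g).filter (fun i => τ (i : ℕ) ∈ c) with hTdef
      have hTne : T.Nonempty := ⟨i₁, by simp [hTdef, hi₁lt, hi₁mem]⟩
      set M : ℕ := T.max' hTne with hMdef
      have hMmem : M ∈ T := T.max'_mem hTne
      have hMlt : M < g := by
        have := hMmem
        rw [hTdef, Finset.mem_filter, Finset.mem_range] at this
        exact this.1
      have hMc : τ (M : ℕ) ∈ c := by
        have := hMmem
        rw [hTdef, Finset.mem_filter] at this
        exact this.2
      have hmax : ∀ i : ℕ, i < g → τ (i : ℕ) ∈ c → i ≤ M := by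
        intro i hilt himem
        exact T.le_max' i (by simp [hTdef, hilt, himem])
      have hMne1 : M ≠ g - 1 := by
        intro h
        apply hwc
        have hτw : τ ((M : ℕ) : ZMod g) = w := by
          rw [← hwτ]
          congr 1
          rw [h, cast_sub' 1 (by omega)]
          push_cast; ring
        rw [← hτw]
        exact hMc
      -- rotate c to start at v₀
      obtain ⟨k₀, t₀, hk₀le, hrotc⟩ := exists_rotate_head hMc
      rcases t₀ with _ | ⟨q, _ | ⟨r, t₂⟩⟩
      · -- t₀ = []
        have := congrArg List.length hrotc
        rw [List.length_rotate, hclen] at this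
        simp at this
        omega
      · -- t₀ = [q]
        have := congrArg List.length hrotc
        rw [List.length_rotate, hclen] at this
        simp at this
        omega
      · -- t₀ = q :: r :: t₂
        have hc₁cyc : D.IsCycleList (c.rotate k₀) := cycle_rotate hc k₀
        have hc₁mem : ∀ z, z ∈ τ (M : ℕ) :: q :: r :: t₂ ↔ z ∈ c := by
          intro z; rw [← hrotc]; exact List.mem_rotate
        have hc₁len : t₂.length + 3 = m := by
          have := congrArg List.length hrotc
          rw [List.length_rotate, hclen] at this
          simp at this
          omega
        rw [hrotc] at hc₁cyc
        obtain ⟨hc₁ne, hc₁nd, hc₁ch, hc₁cl⟩ := hc₁cyc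
        have hadj0 : D.Adj (τ (M : ℕ)) q := (List.isChain_cons_cons.1 hc₁ch).1
        have hqoff : q ∉ Set.range τ := by
          rintro ⟨jZ, rfl⟩
          have hj : jZ = (M : ℕ) + 1 := Hchord _ _ hadj0
          have hjval : jZ.val ≤ M := hmax jZ.val (ZMod.val_lt jZ)
            (by
              rw [show ((jZ.val : ℕ) : ZMod g) = jZ from ZMod.natCast_rightInverse jZ]
              exact (hc₁mem _).1 (by simp))
          have hMg : M + 1 < g := by omega
          have : jZ.val = M + 1 := by
            rw [hj, show ((M : ℕ) : ZMod g) + 1 = ((M + 1 : ℕ) : ZMod g) by push_cast; ring]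
            exact ZMod.val_cast_of_lt hMg
          omega
        have hadjqr : D.Adj q r := (List.isChain_cons_cons.1 (List.isChain_cons_cons.1 hc₁ch).2).1
        have hrn : r ∈ Set.range τ := by
          rcases Htouch q r hadjqr with h | h
          · exact absurd h hqoff
          · exact h
        obtain ⟨kZ, hkZ⟩ := hrn
        have hk2 : kZ = ((M : ℕ) : ZMod g) + 2 :=
          HB k₀ _ q _ t₂ hrotc hqoff _ _ rfl hkZ.symm
        have hrc : r ∈ c := (hc₁mem r).1 (by simp)
        have hrw : r ≠ w := fun h => hwc (h ▸ hrc)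
        have hkne1 : kZ ≠ -1 := by
          intro h
          exact hrw (by rw [← hkZ, h, hwτ])
        have hkval : kZ.val ≤ M := hmax kZ.val (ZMod.val_lt kZ)
          (by
            rw [show ((kZ.val : ℕ) : ZMod g) = kZ from ZMod.natCast_rightInverse kZ, hkZ]
            exact hrc)
        have hMne3 : M ≠ g - 3 := by
          intro h
          apply hkne1
          rw [hk2, h, cast_sub' 3 (by omega)]
          push_cast
          ring
        have hM2 : M = g - 2 := by
          by_contra hM2
          have hMg : M + 2 < g := by omega
          have : kZ.val = M + 2 := by
            rw [hk2, show ((M : ℕ) : ZMod g) + 2 = ((M + 2 : ℕ) : ZMod g) by push_cast; ring]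
            exact ZMod.val_cast_of_lt hMg
          omega
        have hv₀2 : ((M : ℕ) : ZMod g) = -2 := by
          rw [hM2, cast_sub' 2 (by omega)]
          push_cast
          ring
        have hkZ0 : kZ = 0 := by rw [hk2, hv₀2]; ring
        have hr0 : r = τ ((0 : ℕ) : ZMod g) := by
          rw [show (((0 : ℕ)) : ZMod g) = 0 by push_cast; ring, ← hkZ0, hkZ]
        have hτM2 : τ ((M : ℕ) : ZMod g) = τ (-2 : ZMod g) := by rw [hv₀2]
        have HBc₁ : ∀ (k : ℕ) (a x b : V) (rest : List V),
            (τ (M : ℕ) :: q :: r :: t₂).rotate k = a :: x :: b :: rest →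
            x ∉ Set.range τ → ∀ ia ib : ZMod g, a = τ ia → b = τ ib → ib = ia + 2 := by
          intro k a x b rest hk hxoff ia ib ha hb
          refine HB (k₀ + k) a x b rest ?_ hxoff ia ib ha hb
          rw [← List.rotate_rotate, hrotc, hk]
        have hwz : ∀ z ∈ τ (M : ℕ) :: q :: r :: t₂, z ≠ τ (-1 : ZMod g) := by
          intro z hz h
          rw [hwτ] at h
          exact hwc (h ▸ (hc₁mem z).1 hz)
        have hclose : ∀ h : (τ (M : ℕ) :: q :: r :: t₂ : List V) ≠ [],
            D.Adj ((τ (M : ℕ) :: q :: r :: t₂).getLast h) (τ (-2 : ZMod g)) := by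
          intro h
          rw [← hτM2]
          exact hc₁cl
        have hheadc : ∀ h : (τ (M : ℕ) :: q :: r :: t₂ : List V) ≠ [],
            (τ (M : ℕ) :: q :: r :: t₂).head h = τ (-2 : ZMod g) := by
          intro h
          rw [← hτM2]
          rfl
        have h0ne : (((0 : ℕ) : ZMod g)) ≠ -2 := by
          intro h
          have h2 : ((g - 2 : ℕ) : ZMod g) = ((0 : ℕ) : ZMod g) := by
            rw [cast_sub' 2 (by omega)]
            push_cast at h ⊢
            linear_combination -h
          have := cast_inj_nat h2 (by omega) (by omega)
          omega
        have hnv : ∀ z ∈ t₂, z ≠ τ (-2 : ZMod g) := by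
          intro z hz h
          rw [← hτM2] at h
          exact (List.nodup_cons.1 hc₁nd).1 (h ▸ (by simp [hz] : z ∈ q :: r :: t₂))
        have hsuf : (τ ((0 : ℕ) : ZMod g) :: t₂) <:+ (τ (M : ℕ) :: q :: r :: t₂) := by
          refine ⟨[τ (M : ℕ), q], ?_⟩
          rw [← hr0]
          rfl
        have hwalk := walkup hg3 (τ (M : ℕ) :: q :: r :: t₂) Hchord Htouch HBc₁ hwz hc₁ch
          hclose hheadc (by simp; omega) t₂.length t₂ 0 rfl (by omega) h0ne hnv hsuf
        omega

end Stmt1Aux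

/-- A strongly connected digraph is λ'-connected iff it has a
girth cycle `C` such that `D − V(C)` contains an arc. -/
theorem stmt1 {V : Type} [Fintype V] (D : Digr V) (hO : D.Oriented)
    (hS : D.StronglyConnected) :
    D.LambdaPrimeConnected ↔
      ∃ l : List V, D.IsCycleList l ∧ l.length = D.girth ∧
        (D.delVerts {x | x ∈ l}).HasArc := by
  constructor
  · rintro ⟨S, hS1, X, ⟨x₀, hXeq⟩, ⟨p, hpX, q, hqX, hpq⟩, hout⟩
    obtain ⟨u, v, huv, huX, hvX⟩ : ∃ u v, D.Adj u v ∧ u ∉ X ∧ v ∉ X := by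
      obtain ⟨u, v, h⟩ := hout
      exact ⟨u, v, h.1, h.2.1, h.2.2⟩
    rw [hXeq] at hpX hqX
    have hqp : Relation.ReflTransGen (D.delArcs S).Adj q p :=
      Relation.ReflTransGen.trans hqX.2 hpX.1
    set r : V → V → Prop := fun a b => D.Adj a b ∧ b ∈ X with hrdef
    have step : ∀ a, Relation.ReflTransGen (D.delArcs S).Adj a p →
        (D.delArcs S).MReach x₀ a → Relation.ReflTransGen r a p := by
      intro a h
      induction h using Relation.ReflTransGen.head_induction_on with
      | refl => intro _; exact .refl
      | @head a' c' hac hcp ih =>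
        intro haX
        have hcX : (D.delArcs S).MReach x₀ c' :=
          ⟨Relation.ReflTransGen.tail haX.1 hac, Relation.ReflTransGen.trans hcp hpX.2⟩
        exact .head ⟨hac.1, by rw [hXeq]; exact hcX⟩ (ih hcX)
    have hrtg : Relation.ReflTransGen r q p := step q hqp hqX
    obtain ⟨l1, hch1, hlast1⟩ := List.exists_isChain_cons_of_relationReflTransGen hrtg
    obtain ⟨l', hch', hlast', hnd', hsub'⟩ :=
      Stmt1Aux.dedup_chain l1.length l1 q p rfl hch1 hlast1
    have hlcX : ∀ z ∈ q :: l', z ∈ X := by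
      intro z hz
      rcases List.mem_cons.1 hz with rfl | hz
      · rw [hXeq]; exact hqX
      · obtain ⟨cc, hcc⟩ := Stmt1Aux.chain_mem_targets l' q hch' z hz
        exact hcc.2
    have hcyc : D.IsCycleList (q :: l') := by
      refine ⟨List.cons_ne_nil _ _, hnd', ?_, ?_⟩
      · exact List.Chain.imp (fun a b h => h.1) hch'
      · rw [hlast']
        exact hpq.1
    exact Stmt1Aux.key hO (q :: l').length (q :: l') rfl hcyc u v huv
      (fun h => huX (hlcX u h)) (fun h => hvX (hlcX v h))
  · rintro ⟨l, hlcyc, hllen, hlarc⟩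
    have hlcyc' := hlcyc
    obtain ⟨hlne, hlnd, hlch, hlcl⟩ := hlcyc'
    refine ⟨{pr : V × V | D.Adj pr.1 pr.2 ∧ ¬(pr.1 ∈ l ∧ pr.2 ∈ l)},
      fun pr hpr => hpr.1, {x | x ∈ l}, ?_, ?_, hlarc⟩
    all_goals {
      have hD'iff : ∀ a b : V,
          (D.delArcs {pr : V × V | D.Adj pr.1 pr.2 ∧ ¬(pr.1 ∈ l ∧ pr.2 ∈ l)}).Adj a b ↔
          (D.Adj a b ∧ a ∈ l ∧ b ∈ l) := by
        intro a b
        constructor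
        · rintro ⟨h1, h2⟩
          simp only [Set.mem_setOf_eq] at h2
          refine ⟨h1, ?_⟩
          by_contra hq
          exact h2 ⟨h1, hq⟩
        · rintro ⟨h1, h2, h3⟩
          exact ⟨h1, fun hS' => hS'.2 ⟨h2, h3⟩⟩
      have hl'cyc : (D.delArcs {pr : V × V | D.Adj pr.1 pr.2 ∧ ¬(pr.1 ∈ l ∧ pr.2 ∈ l)}).IsCycleList l := by
        refine ⟨hlne, hlnd, ?_, ?_⟩
        · replace hlch := List.isChain_iff_getElem.1 hlch; refine List.isChain_iff_getElem.2 ?_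
          intro i hi
          exact (hD'iff _ _).2 ⟨hlch i hi, List.getElem_mem _, List.getElem_mem _⟩
        · exact (hD'iff _ _).2 ⟨hlcl, List.getLast_mem hlne, List.head_mem hlne⟩
      first
      | { -- strong component
          refine ⟨l.head hlne, ?_⟩
          ext y
          simp only [Set.mem_setOf_eq]
          constructor
          · intro hy
            exact ⟨Stmt1Aux.cycle_reach hl'cyc (List.head_mem hlne) hy,
              Stmt1Aux.cycle_reach hl'cyc hy (List.head_mem hlne)⟩
          · intro hy
            rcases Relation.ReflTransGen.cases_head hy.2 with heq | ⟨c, hyc, _⟩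
            · rw [heq]; exact List.head_mem hlne
            · exact ((hD'iff _ _).1 hyc).2.1 }
      | { -- internal arc
          exact ⟨l.getLast hlne, List.getLast_mem hlne, l.head hlne, List.head_mem hlne,
            (hD'iff _ _).2 ⟨hlcl, List.getLast_mem hlne, List.head_mem hlne⟩⟩ }
    }
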